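/- Let R > 0, k ≥ 1, β > 0, θ ∈ (0,1), B > 0. Suppose Φ : (0,R] → [0,∞) is bounded, and Ψ_i : (0,R] → [0,∞), i = 1,…,k, are decreasing functions satisfying Ψ_i(σ·t) ≤ σ^{−β·i}·Ψ_i(t) for all t ∈ (0,R] and all σ ∈ (0,1). If the inequality Φ(r) ≤ θ·Φ(s) + Σ_{i=1}^k Ψ_i(s−r) + B holds for all r, s ∈ (0,R] with r < s, then for every τ ∈ (0,1) there exists a constant C = C(θ, k, β, τ) > 0 such that Φ(τR) ≤ C·(Σ_{i=1}^k Ψ_i(R) + B). -/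
import Mathlib


open Finset Set

private lemma geom_bound {r : ℝ} (h0 : 0 ≤ r) (h1 : r < 1) (n : ℕ) :
    ∑ i ∈ Finset.range n, r ^ i ≤ (1 - r)⁻¹ := by
  calc ∑ i ∈ Finset.range n, r ^ i
      ≤ ∑' i : ℕ, r ^ i :=
        Summable.sum_le_tsum _ (fun i _ => pow_nonneg h0 i) (summable_geometric_of_lt_one h0 h1)
    _ = (1 - r)⁻¹ := tsum_geometric_of_lt_one h0 h1

set_option maxHeartbeats 1000000 in
/-- Lemma 2.4 (iteration lemma): let `θ ∈ (0,1)`, `β > 0`, `k ≥ 1`, `τ ∈ (0,1)`. There is a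
constant `C = C(θ, k, β, τ) > 0` such that for every `R > 0`, `B > 0`, every bounded
`Φ : (0,R] → ℝ₊` and all decreasing `Ψᵢ : (0,R] → ℝ₊` (`i = 1, …, k`) satisfying
`Ψᵢ(σ t) ≤ σ^{-β i} Ψᵢ(t)` for `t ∈ (0,R]`, `σ ∈ (0,1)`: if
`Φ(r) ≤ θ Φ(s) + ∑ᵢ Ψᵢ(s-r) + B` for all `0 < r < s ≤ R`, then
`Φ(τ R) ≤ C (∑ᵢ Ψᵢ(R) + B)`. -/
theorem iteration_lemma (k : ℕ) (hk : 1 ≤ k) (β θ τ : ℝ) (hβ : 0 < β)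
    (hθ : θ ∈ Set.Ioo (0:ℝ) 1) (hτ : τ ∈ Set.Ioo (0:ℝ) 1) :
    ∃ C : ℝ, 0 < C ∧
      ∀ (R B : ℝ), 0 < R → 0 < B →
      ∀ Φ : ℝ → ℝ, (∀ t ∈ Set.Ioc 0 R, 0 ≤ Φ t) → (∃ K, ∀ t ∈ Set.Ioc 0 R, Φ t ≤ K) →
      ∀ Ψ : Fin k → ℝ → ℝ,
        (∀ i, ∀ t ∈ Set.Ioc 0 R, 0 ≤ Ψ i t) →
        (∀ i, ∀ t ∈ Set.Ioc 0 R, ∀ s ∈ Set.Ioc 0 R, t ≤ s → Ψ i s ≤ Ψ i t) →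
        (∀ i, ∀ t ∈ Set.Ioc 0 R, ∀ σ ∈ Set.Ioo (0:ℝ) 1,
          Ψ i (σ * t) ≤ σ ^ (-(β * ((i : ℕ) + 1))) * Ψ i t) →
        (∀ r ∈ Set.Ioc 0 R, ∀ s ∈ Set.Ioc 0 R, r < s →
          Φ r ≤ θ * Φ s + (∑ i, Ψ i (s - r)) + B) →
        Φ (τ * R) ≤ C * ((∑ i, Ψ i R) + B) := by
  obtain ⟨hθ0, hθ1⟩ := hθ
  obtain ⟨hτ0, hτ1⟩ := hτ
  have hk0 : (0:ℝ) < (k:ℝ) := by exact_mod_cast Nat.lt_of_lt_of_le Nat.zero_lt_one hk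
  have hβk : (0:ℝ) < β * k := by positivity
  -- choose λ = L with L^(βk) = (1+θ)/2
  set L : ℝ := ((1+θ)/2) ^ ((β * (k:ℝ))⁻¹) with hLdef
  have hbase0 : (0:ℝ) < (1+θ)/2 := by linarith
  have hbase1 : (1+θ)/2 < 1 := by linarith
  have hL0 : 0 < L := Real.rpow_pos_of_pos hbase0 _
  have hL1 : L < 1 := Real.rpow_lt_one hbase0.le hbase1 (by positivity)
  have hLβk : L ^ (β * (k:ℝ)) = (1+θ)/2 := by
    rw [hLdef, ← Real.rpow_mul hbase0.le, inv_mul_cancel₀ hβk.ne', Real.rpow_one]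
  set q : ℝ := 2*θ/(1+θ) with hqdef
  have hq0 : 0 < q := by positivity
  have hq1 : q < 1 := by rw [hqdef, div_lt_one (by linarith)]; linarith
  have hLneg : L ^ (-(β * (k:ℝ))) = 2/(1+θ) := by
    rw [Real.rpow_neg hL0.le, hLβk, inv_div]
  have hq : θ * L ^ (-(β * (k:ℝ))) = q := by
    rw [hLneg, hqdef]; ring
  set c : ℝ := (1-L)*(1-τ) with hcdef
  have hc0 : 0 < c := by apply mul_pos <;> linarith
  have hc1 : c < 1 := by nlinarith
  set A : ℝ := c ^ (-(β * (k:ℝ))) with hAdef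
  have hA0 : 0 < A := Real.rpow_pos_of_pos hc0 _
  have h1q : (0:ℝ) < (1-q)⁻¹ := inv_pos.2 (by linarith)
  have h1θ : (0:ℝ) < (1-θ)⁻¹ := inv_pos.2 (by linarith)
  refine ⟨A * (1-q)⁻¹ + (1-θ)⁻¹, add_pos (mul_pos hA0 h1q) h1θ, ?_⟩
  intro R B hR hB Φ hΦ0 ⟨K, hK⟩ Ψ hΨ0 hΨmono hΨscale hmain
  -- the sequence of radii
  set t : ℕ → ℝ := fun n => R - L^n * (1-τ) * R with htdef
  have hσpos : ∀ n : ℕ, 0 < L^n * c := fun n => by positivity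
  have hσlt1 : ∀ n : ℕ, L^n * c < 1 := by
    intro n
    calc L^n * c ≤ 1 * c := by
          apply mul_le_mul_of_nonneg_right _ hc0.le
          exact pow_le_one₀ hL0.le hL1.le
      _ < 1 := by rwa [one_mul]
  have htmem : ∀ n, t n ∈ Set.Ioc 0 R := by
    intro n
    have h1 : L^n * (1-τ) ≤ 1 * (1-τ) :=
      mul_le_mul_of_nonneg_right (pow_le_one₀ hL0.le hL1.le) (by linarith)
    have h2 : 0 < L^n * (1-τ) * R :=
      mul_pos (mul_pos (pow_pos hL0 n) (by linarith)) hR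
    constructor
    · simp only [htdef]; nlinarith
    · simp only [htdef]; linarith
  have hdiff : ∀ n : ℕ, t (n+1) - t n = (L^n * c) * R := by
    intro n
    simp only [htdef, hcdef, pow_succ]
    ring
  have htlt : ∀ n, t n < t (n+1) := by
    intro n
    have h1 := hdiff n
    have h2 : 0 < (L^n * c) * R := mul_pos (hσpos n) hR
    linarith
  have ht0 : t 0 = τ * R := by simp only [htdef, pow_zero]; ring
  -- key induction
  have key : ∀ N : ℕ, Φ (τ * R) ≤ θ^N * Φ (t N) +
      ∑ n ∈ Finset.range N, θ^n * ((∑ i, Ψ i ((L^n * c) * R)) + B) := by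
    intro N
    induction N with
    | zero => simp [ht0]
    | succ N ih =>
      have hstep := hmain (t N) (htmem N) (t (N+1)) (htmem (N+1)) (htlt N)
      rw [show t (N+1) - t N = (L^N * c) * R from hdiff N] at hstep
      have hθN : (0:ℝ) ≤ θ^N := pow_nonneg hθ0.le N
      have hmul := mul_le_mul_of_nonneg_left hstep hθN
      rw [Finset.sum_range_succ]
      calc Φ (τ * R) ≤ θ^N * Φ (t N) +
              ∑ n ∈ Finset.range N, θ^n * ((∑ i, Ψ i ((L^n * c) * R)) + B) := ih
        _ ≤ θ^N * (θ * Φ (t (N+1)) + (∑ i, Ψ i ((L^N * c) * R)) + B)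
              + ∑ n ∈ Finset.range N, θ^n * ((∑ i, Ψ i ((L^n * c) * R)) + B) := by linarith
        _ = θ^(N+1) * Φ (t (N+1)) + (∑ n ∈ Finset.range N, θ^n * ((∑ i, Ψ i ((L^n * c) * R)) + B)
              + θ^N * ((∑ i, Ψ i ((L^N * c) * R)) + B)) := by ring
  have hΨR0 : (0:ℝ) ≤ ∑ i, Ψ i R := Finset.sum_nonneg fun i _ => hΨ0 i R ⟨hR, le_refl R⟩
  -- bound each Ψ term
  have hLn : ∀ n : ℕ, ((L^n : ℝ)) ^ (-(β * (k:ℝ))) = (L ^ (-(β * (k:ℝ))))^n := by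
    intro n
    rw [← Real.rpow_natCast L n, ← Real.rpow_mul hL0.le, mul_comm,
      Real.rpow_mul hL0.le, Real.rpow_natCast]
  have hterm : ∀ n : ℕ, θ^n * (∑ i, Ψ i ((L^n * c) * R)) ≤ q^n * (A * ∑ i, Ψ i R) := by
    intro n
    have hsum1 : (∑ i, Ψ i ((L^n * c) * R)) ≤ (L^n * c) ^ (-(β * (k:ℝ))) * ∑ i, Ψ i R := by
      rw [Finset.mul_sum]
      apply Finset.sum_le_sum
      intro i _
      have h1 : Ψ i ((L^n * c) * R) ≤ (L^n * c) ^ (-(β * ((i:ℕ) + 1))) * Ψ i R :=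
        hΨscale i R ⟨hR, le_refl R⟩ (L^n * c) ⟨hσpos n, hσlt1 n⟩
      have hik : ((i:ℕ):ℝ) + 1 ≤ (k:ℝ) := by
        have := i.isLt
        exact_mod_cast Nat.succ_le_of_lt this
      have hexp : -(β * (k:ℝ)) ≤ -(β * ((i:ℕ) + 1)) := by nlinarith
      have h2 : (L^n * c) ^ (-(β * ((i:ℕ) + 1))) ≤ (L^n * c) ^ (-(β * (k:ℝ))) :=
        Real.rpow_le_rpow_of_exponent_ge (hσpos n) (hσlt1 n).le hexp
      calc Ψ i ((L^n * c) * R) ≤ (L^n * c) ^ (-(β * ((i:ℕ) + 1))) * Ψ i R := h1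
        _ ≤ (L^n * c) ^ (-(β * (k:ℝ))) * Ψ i R :=
          mul_le_mul_of_nonneg_right h2 (hΨ0 i R ⟨hR, le_refl R⟩)
    have hσrw : (L^n * c) ^ (-(β * (k:ℝ))) = (L ^ (-(β * (k:ℝ))))^n * A := by
      rw [Real.mul_rpow (pow_nonneg hL0.le n) hc0.le, hLn n, hAdef]
    calc θ^n * (∑ i, Ψ i ((L^n * c) * R))
        ≤ θ^n * ((L ^ (-(β * (k:ℝ))))^n * A * ∑ i, Ψ i R) := by
          rw [← hσrw]
          exact mul_le_mul_of_nonneg_left hsum1 (pow_nonneg hθ0.le n)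
      _ = (θ * L ^ (-(β * (k:ℝ))))^n * (A * ∑ i, Ψ i R) := by rw [mul_pow]; ring
      _ = q^n * (A * ∑ i, Ψ i R) := by rw [hq]
  -- bound the sum
  have hsum : ∀ N : ℕ, ∑ n ∈ Finset.range N, θ^n * ((∑ i, Ψ i ((L^n * c) * R)) + B)
      ≤ (1-q)⁻¹ * (A * ∑ i, Ψ i R) + (1-θ)⁻¹ * B := by
    intro N
    calc ∑ n ∈ Finset.range N, θ^n * ((∑ i, Ψ i ((L^n * c) * R)) + B)
        ≤ ∑ n ∈ Finset.range N, (q^n * (A * ∑ i, Ψ i R) + θ^n * B) := by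
          apply Finset.sum_le_sum
          intro n _
          have := hterm n
          nlinarith [this]
      _ = (∑ n ∈ Finset.range N, q^n) * (A * ∑ i, Ψ i R)
            + (∑ n ∈ Finset.range N, θ^n) * B := by
          rw [Finset.sum_add_distrib, Finset.sum_mul, Finset.sum_mul]
      _ ≤ (1-q)⁻¹ * (A * ∑ i, Ψ i R) + (1-θ)⁻¹ * B := by
          have g1 := geom_bound hq0.le hq1 N
          have g2 := geom_bound hθ0.le hθ1 N
          have := mul_le_mul_of_nonneg_right g1 (by positivity : (0:ℝ) ≤ A * ∑ i, Ψ i R)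
          have := mul_le_mul_of_nonneg_right g2 hB.le
          linarith
  -- put things together and take the limit
  have hKbd : ∀ N : ℕ, Φ (τ * R) ≤ θ^N * K + ((1-q)⁻¹ * (A * ∑ i, Ψ i R) + (1-θ)⁻¹ * B) := by
    intro N
    have h1 := key N
    have h2 := hsum N
    have h3 : θ^N * Φ (t N) ≤ θ^N * K :=
      mul_le_mul_of_nonneg_left (hK (t N) (htmem N)) (pow_nonneg hθ0.le N)
    linarith
  have hlim : Filter.Tendsto (fun N : ℕ => θ^N * K + ((1-q)⁻¹ * (A * ∑ i, Ψ i R) + (1-θ)⁻¹ * B))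
      Filter.atTop (nhds (0 * K + ((1-q)⁻¹ * (A * ∑ i, Ψ i R) + (1-θ)⁻¹ * B))) :=
    (((tendsto_pow_atTop_nhds_zero_of_lt_one hθ0.le hθ1).mul_const K).add tendsto_const_nhds)
  have hfin : Φ (τ * R) ≤ 0 * K + ((1-q)⁻¹ * (A * ∑ i, Ψ i R) + (1-θ)⁻¹ * B) :=
    ge_of_tendsto' hlim hKbd
  rw [zero_mul, zero_add] at hfin
  have expand : (A * (1-q)⁻¹ + (1-θ)⁻¹) * ((∑ i, Ψ i R) + B)
      = ((1-q)⁻¹ * (A * ∑ i, Ψ i R) + (1-θ)⁻¹ * B)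
        + ((1-θ)⁻¹ * (∑ i, Ψ i R) + A * (1-q)⁻¹ * B) := by ring
  have e1 : 0 ≤ (1-θ)⁻¹ * (∑ i, Ψ i R) := mul_nonneg h1θ.le hΨR0
  have e2 : 0 ≤ A * (1-q)⁻¹ * B := mul_nonneg (mul_nonneg hA0.le h1q.le) hB.le
  linarith
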